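/- Suppose d : S → ℕ ∪ {∞} satisfies: for every T ∈ S with more than one edge and every choice of auxiliary leaf, d(T) ≥ d(T') when the deleted trivalent vertex is off the v–w path, and d(T) ≥ 2·d(T') when it is on the v–w path, and d(single edge) ≥ 1. Then d(T) ≥ 2^{d(v,w)−1} for every uni-trivalent tree T with marked leaves v, w. -/

import Mathlib

open scoped Classical

/-- A uni-trivalent tree (finite tree with all vertex degrees 1 or 3) with two marked
distinct leaves `v`, `w`. -/
structure MarkedUniTrivalentTree where
  /-- number of vertices -/
  n : ℕ
  /-- the underlying graph -/
  G : SimpleGraph (Fin n)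
  tree : G.IsTree
  deg : ∀ u : Fin n, G.degree u = 1 ∨ G.degree u = 3
  /-- first marked leaf -/
  v : Fin n
  /-- second marked leaf -/
  w : Fin n
  hv : G.degree v = 1
  hw : G.degree w = 1
  hvw : v ≠ w

/-- `T'` is the reduction of `T` at the auxiliary leaf `x ∉ {v, w}` with neighbor `y`:
delete `x` and `y` (and the edges incident to `y`) and join the other two neighbors
`s`, `t` of `y` by a new edge.  This is expressed via an injection `φ` of the vertices of
`T'` onto the vertices of `T` other than `x` and `y`, preserving the marked leaves. -/
def IsReduction (T : MarkedUniTrivalentTree) (x y : Fin T.n)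
    (T' : MarkedUniTrivalentTree) : Prop :=
  T.G.Adj x y ∧ T.G.degree x = 1 ∧ x ≠ T.v ∧ x ≠ T.w ∧
  ∃ φ : Fin T'.n → Fin T.n, Function.Injective φ ∧
    (∀ z : Fin T.n, (z ≠ x ∧ z ≠ y) ↔ z ∈ Set.range φ) ∧
    φ T'.v = T.v ∧ φ T'.w = T.w ∧
    ∃ s t : Fin T.n, s ≠ t ∧ T.G.Adj y s ∧ T.G.Adj y t ∧ s ≠ x ∧ t ≠ x ∧
      ∀ a b : Fin T'.n, T'.G.Adj a b ↔
        (T.G.Adj (φ a) (φ b) ∨ (φ a = s ∧ φ b = t) ∨ (φ a = t ∧ φ b = s))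

namespace Stmt13Aux

/-- Two walks with the same support are equal. -/
theorem walk_eq_of_support_eq {V : Type} {G : SimpleGraph V} :
    ∀ {a b : V} (p q : G.Walk a b), p.support = q.support → p = q := by
  intro a b p
  induction p with
  | nil =>
    intro q h
    cases q with
    | nil => rfl
    | cons h' q' => simp [SimpleGraph.Walk.support_cons] at h
  | cons h' p' ih =>
    intro q hq
    cases q with
    | nil => simp [SimpleGraph.Walk.support_cons] at hq
    | @cons _ c' _ h'' q' =>
      simp only [SimpleGraph.Walk.support_cons, List.cons.injEq, true_and] at hq
      have hcc : _ :: _ = _ :: _ :=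
        (p'.support_eq_cons).symm.trans (hq.trans q'.support_eq_cons)
      have hc := (List.cons.injEq _ _ _ _ ▸ hcc).1
      subst hc
      rw [ih q' hq]

variable {n m : ℕ} (G : SimpleGraph (Fin n)) (x y s t : Fin n) (φ : Fin m → Fin n)

/-- The reduced graph. -/
def RG (hst : s ≠ t) (hφ : Function.Injective φ) : SimpleGraph (Fin m) where
  Adj a b := G.Adj (φ a) (φ b) ∨ (φ a = s ∧ φ b = t) ∨ (φ a = t ∧ φ b = s)
  symm := by
    refine ⟨fun a b h => ?_⟩
    rcases h with h | ⟨h1, h2⟩ | ⟨h1, h2⟩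
    · exact Or.inl h.symm
    · exact Or.inr (Or.inr ⟨h2, h1⟩)
    · exact Or.inr (Or.inl ⟨h2, h1⟩)
  loopless := by
    refine ⟨fun a h => ?_⟩
    rcases h with h | ⟨h1, h2⟩ | ⟨h1, h2⟩
    · exact G.loopless.irrefl _ h
    · exact hst (h1 ▸ h2 ▸ rfl)
    · exact hst (h2 ▸ h1 ▸ rfl)

lemma RG_adj (hst : s ≠ t) (hφ : Function.Injective φ) (a b : Fin m) :
    (RG G s t φ hst hφ).Adj a b ↔
      (G.Adj (φ a) (φ b) ∨ (φ a = s ∧ φ b = t) ∨ (φ a = t ∧ φ b = s)) := Iff.rfl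

section Facts

variable (hst : s ≠ t) (hφ : Function.Injective φ)
  (hrange : ∀ z : Fin n, (z ≠ x ∧ z ≠ y) ↔ z ∈ Set.range φ)
  (hNx : ∀ z, G.Adj x z ↔ z = y)
  (hNy : ∀ z, G.Adj y z ↔ (z = x ∨ z = s ∨ z = t))
  (hnst : ¬ G.Adj s t)

include hrange in
lemma phi_ne_x : ∀ a, φ a ≠ x := fun a h =>
  (((hrange (φ a)).2 ⟨a, rfl⟩).1) h

include hrange in
lemma phi_ne_y : ∀ a, φ a ≠ y := fun a h =>
  (((hrange (φ a)).2 ⟨a, rfl⟩).2) h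

include hNy in
lemma adj_y_s : s ≠ x → s ≠ t → G.Adj y s := by
  intro _ _; exact (hNy s).2 (Or.inr (Or.inl rfl))

include hrange hNx hNy hnst in
/-- Degrees are preserved by the reduction. -/
lemma RG_degree (hsx : s ≠ x) (htx : t ≠ x) (hys : G.Adj y s) (hyt : G.Adj y t)
    (a : Fin m) :
    (RG G s t φ hst hφ).degree a = G.degree (φ a) := by
  classical
  have hty : t ≠ y := hyt.ne.symm
  have hsy : s ≠ y := hys.ne.symm
  have hax : φ a ≠ x := phi_ne_x x y φ hrange a
  have hay : φ a ≠ y := phi_ne_y x y φ hrange a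
  have hcard : (RG G s t φ hst hφ).degree a =
      (((RG G s t φ hst hφ).neighborFinset a).image φ).card :=
    (Finset.card_image_of_injective _ hφ).symm
  by_cases hs : φ a = s
  · have himg : ((RG G s t φ hst hφ).neighborFinset a).image φ =
        insert t ((G.neighborFinset (φ a)).erase y) := by
      ext z
      simp only [Finset.mem_image, SimpleGraph.mem_neighborFinset, Finset.mem_insert,
        Finset.mem_erase]
      constructor
      · rintro ⟨b', hb', rfl⟩
        rcases hb' with hT | ⟨h1, h2⟩ | ⟨h1, h2⟩
        · exact Or.inr ⟨phi_ne_y x y φ hrange b', hT⟩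
        · exact Or.inl h2
        · exact absurd (hs.symm.trans h1) hst
      · rintro (rfl | ⟨hzy, hadj⟩)
        · obtain ⟨b', hb'⟩ := (hrange z).1 ⟨htx, hty⟩
          exact ⟨b', Or.inr (Or.inl ⟨hs, hb'⟩), hb'⟩
        · have hzx : z ≠ x := by
            rintro rfl
            exact hay ((hNx (φ a)).1 hadj.symm)
          obtain ⟨b', hb'⟩ := (hrange z).1 ⟨hzx, hzy⟩
          exact ⟨b', Or.inl (hb'.symm ▸ hadj), hb'⟩
    have hymem : y ∈ G.neighborFinset (φ a) := by
      rw [SimpleGraph.mem_neighborFinset, hs]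
      exact hys.symm
    have h1le : 1 ≤ G.degree (φ a) := Finset.card_pos.2 ⟨y, hymem⟩
    have htne : t ∉ (G.neighborFinset (φ a)).erase y := by
      intro hmem
      refine hnst ?_
      rw [← hs]
      exact (SimpleGraph.mem_neighborFinset _ _ _).1 (Finset.mem_erase.1 hmem).2
    rw [hcard, himg, Finset.card_insert_of_notMem htne, Finset.card_erase_of_mem hymem]
    have : (G.neighborFinset (φ a)).card = G.degree (φ a) := rfl
    omega
  · by_cases ht : φ a = t
    · have himg : ((RG G s t φ hst hφ).neighborFinset a).image φ =
          insert s ((G.neighborFinset (φ a)).erase y) := by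
        ext z
        simp only [Finset.mem_image, SimpleGraph.mem_neighborFinset, Finset.mem_insert,
          Finset.mem_erase]
        constructor
        · rintro ⟨b', hb', rfl⟩
          rcases hb' with hT | ⟨h1, h2⟩ | ⟨h1, h2⟩
          · exact Or.inr ⟨phi_ne_y x y φ hrange b', hT⟩
          · exact absurd (h1.symm.trans ht) hst
          · exact Or.inl h2
        · rintro (rfl | ⟨hzy, hadj⟩)
          · obtain ⟨b', hb'⟩ := (hrange z).1 ⟨hsx, hsy⟩
            exact ⟨b', Or.inr (Or.inr ⟨ht, hb'⟩), hb'⟩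
          · have hzx : z ≠ x := by
              rintro rfl
              exact hay ((hNx (φ a)).1 hadj.symm)
            obtain ⟨b', hb'⟩ := (hrange z).1 ⟨hzx, hzy⟩
            exact ⟨b', Or.inl (hb'.symm ▸ hadj), hb'⟩
      have hymem : y ∈ G.neighborFinset (φ a) := by
        rw [SimpleGraph.mem_neighborFinset, ht]
        exact hyt.symm
      have h1le : 1 ≤ G.degree (φ a) := Finset.card_pos.2 ⟨y, hymem⟩
      have hsne : s ∉ (G.neighborFinset (φ a)).erase y := by
        intro hmem
        refine hnst ?_
        refine SimpleGraph.Adj.symm ?_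
        rw [← ht]
        exact (SimpleGraph.mem_neighborFinset _ _ _).1 (Finset.mem_erase.1 hmem).2
      rw [hcard, himg, Finset.card_insert_of_notMem hsne, Finset.card_erase_of_mem hymem]
      have : (G.neighborFinset (φ a)).card = G.degree (φ a) := rfl
      omega
    · have himg : ((RG G s t φ hst hφ).neighborFinset a).image φ =
          G.neighborFinset (φ a) := by
        ext z
        simp only [Finset.mem_image, SimpleGraph.mem_neighborFinset]
        constructor
        · rintro ⟨b', hb', rfl⟩
          rcases hb' with hT | ⟨h1, h2⟩ | ⟨h1, h2⟩
          · exact hT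
          · exact absurd h1 hs
          · exact absurd h1 ht
        · intro hadj
          have hzx : z ≠ x := by
            rintro rfl
            exact hay ((hNx (φ a)).1 hadj.symm)
          have hzy : z ≠ y := by
            rintro rfl
            rcases (hNy (φ a)).1 hadj.symm with h' | h' | h'
            · exact hax h'
            · exact hs h'
            · exact ht h'
          obtain ⟨b', hb'⟩ := (hrange z).1 ⟨hzx, hzy⟩
          exact ⟨b', Or.inl (hb'.symm ▸ hadj), hb'⟩
      rw [hcard, himg]
      rfl

include hrange hNx hNy in
/-- Reachability in the reduced graph. -/
lemma RG_reach (hsx : s ≠ x) (htx : t ≠ x)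
    (k : ℕ) : ∀ {u u' : Fin n} (p : G.Walk u u'), p.length ≤ k → p.IsPath →
    ∀ (a b : Fin m), φ a = u → φ b = u' → (RG G s t φ hst hφ).Reachable a b := by
  induction k with
  | zero =>
    intro u u' p hlen _ a b ha hb
    cases p with
    | nil => exact (hφ (ha.trans hb.symm) ▸ SimpleGraph.Reachable.refl a)
    | cons h q => simp at hlen
  | succ k ihk =>
    intro u u' p hlen hp a b ha hb
    cases p with
    | nil => exact (hφ (ha.trans hb.symm) ▸ SimpleGraph.Reachable.refl a)
    | @cons _ c _ h q =>
      rw [SimpleGraph.Walk.cons_isPath_iff] at hp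
      by_cases hcy : c = y
      · -- u is adjacent to y, u ≠ x so u ∈ {s,t}
        have hu : u = x ∨ u = s ∨ u = t := (hNy u).1 (hcy ▸ h.symm)
        have hux : u ≠ x := ha ▸ phi_ne_x x y φ hrange a
        have hust : u = s ∨ u = t := hu.resolve_left hux
        cases q with
        | nil =>
          exact absurd (hb.trans hcy) (phi_ne_y x y φ hrange b)
        | @cons _ c' _ h2 q2 =>
          rw [SimpleGraph.Walk.cons_isPath_iff] at hp
          have hc' : c' = x ∨ c' = s ∨ c' = t := (hNy c').1 (hcy ▸ h2)
          rcases hc' with hcx' | hc'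
          · -- next vertex after x would be y again: contradiction
            cases q2 with
            | nil =>
              exact absurd (hb.trans hcx') (phi_ne_x x y φ hrange b)
            | @cons _ c'' _ h3 q3 =>
              have hcy'' : c'' = y := (hNx c'').1 (hcx' ▸ h3)
              rw [SimpleGraph.Walk.cons_isPath_iff] at hp
              refine absurd ?_ hp.1.2
              rw [SimpleGraph.Walk.support_cons]
              refine List.mem_cons_of_mem _ ?_
              rw [hcy, ← hcy'']
              exact q3.start_mem_support
          · -- c' ∈ {s, t}, and {u, c'} = {s, t}
            have hc'x : c' ≠ x := by
              intro h'x
              rcases hc' with h' | h'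
              · exact hsx (h'.symm.trans h'x)
              · exact htx (h'.symm.trans h'x)
            have hc'y : c' ≠ y := fun h' => G.loopless.irrefl c ((h'.trans hcy.symm) ▸ h2)
            obtain ⟨b', hb'⟩ := (hrange c').1 ⟨hc'x, hc'y⟩
            have huc' : u ≠ c' := by
              intro h'
              refine hp.2 ?_
              rw [SimpleGraph.Walk.support_cons]
              refine List.mem_cons_of_mem _ ?_
              rw [h']
              exact q2.start_mem_support
            have hadj : (RG G s t φ hst hφ).Adj a b' := by
              rw [RG_adj]
              rcases hust with hus | hut <;> rcases hc' with h' | h'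
              · exact absurd (hus.trans h'.symm) huc'
              · exact Or.inr (Or.inl ⟨ha.trans hus, hb'.trans h'⟩)
              · exact Or.inr (Or.inr ⟨ha.trans hut, hb'.trans h'⟩)
              · exact absurd (hut.trans h'.symm) huc'
            refine hadj.reachable.trans (ihk q2 ?_ hp.1.1 b' b hb' hb)
            simp only [SimpleGraph.Walk.length_cons] at hlen
            omega
      · by_cases hcx : c = x
        · have : u = y := (hNx u).1 (hcx ▸ h.symm)
          exact absurd (ha.trans this) (phi_ne_y x y φ hrange a)
        · obtain ⟨b', hb'⟩ := (hrange c).1 ⟨hcx, hcy⟩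
          have hadj : (RG G s t φ hst hφ).Adj a b' :=
            Or.inl (by rw [ha, hb']; exact h)
          refine hadj.reachable.trans (ihk q ?_ hp.1 b' b hb' hb)
          simp only [SimpleGraph.Walk.length_cons] at hlen
          omega

include hrange hNx hNy in
/-- Pushing a path in the reduced graph down to the tree. -/
lemma RG_push (hsx : s ≠ x) (htx : t ≠ x) (hys : G.Adj y s) (hyt : G.Adj y t) :
    ∀ {a b : Fin m} (p' : (RG G s t φ hst hφ).Walk a b), p'.IsPath →
    ∃ p : G.Walk (φ a) (φ b), p.IsPath ∧
      p.support.erase y = p'.support.map φ ∧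
      (y ∈ p.support → ((∃ c ∈ p'.support, φ c = s) ∧ (∃ c ∈ p'.support, φ c = t))) ∧
      ((y ∈ p.support ∧ p.length = p'.length + 1) ∨
        (y ∉ p.support ∧ p.length = p'.length)) := by
  intro a b p'
  induction p' with
  | nil =>
    intro _
    refine ⟨SimpleGraph.Walk.nil, SimpleGraph.Walk.IsPath.nil, ?_, ?_, ?_⟩
    · rw [SimpleGraph.Walk.support_nil, SimpleGraph.Walk.support_nil,
        List.erase_of_not_mem, List.map_singleton]
      simp only [List.mem_singleton]
      exact fun h => phi_ne_y x y φ hrange _ h.symm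
    · intro hy
      simp only [SimpleGraph.Walk.support_nil, List.mem_singleton] at hy
      exact absurd hy.symm (phi_ne_y x y φ hrange _)
    · refine Or.inr ⟨?_, rfl⟩
      simp only [SimpleGraph.Walk.support_nil, List.mem_singleton]
      exact fun h => phi_ne_y x y φ hrange _ h.symm
  | @cons a c b h q' ih =>
    intro hp'
    rw [SimpleGraph.Walk.cons_isPath_iff] at hp'
    obtain ⟨p, hp, herase, hyst, hbr⟩ := ih hp'.1
    have hay : φ a ≠ y := phi_ne_y x y φ hrange a
    have hans : φ a ∉ p.support := by
      intro hmem
      have : φ a ∈ p.support.erase y := (List.mem_erase_of_ne hay).2 hmem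
      rw [herase] at this
      obtain ⟨c0, hc0, hc0e⟩ := List.mem_map.1 this
      exact hp'.2 (hφ hc0e ▸ hc0)
    rcases id h with hT | ⟨has, hct⟩ | ⟨hat, hcs⟩
    · -- ordinary edge
      refine ⟨SimpleGraph.Walk.cons hT p, ?_, ?_, ?_, ?_⟩
      · rw [SimpleGraph.Walk.cons_isPath_iff]; exact ⟨hp, hans⟩
      · rw [SimpleGraph.Walk.support_cons, SimpleGraph.Walk.support_cons,
          List.map_cons, List.erase_cons_tail (by simpa using hay), herase]
      · intro hy
        rw [SimpleGraph.Walk.support_cons, List.mem_cons] at hy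
        rcases hy with hy | hy
        · exact absurd hy.symm hay
        · obtain ⟨⟨c1, hc1, hc1e⟩, ⟨c2, hc2, hc2e⟩⟩ := hyst hy
          refine ⟨⟨c1, ?_, hc1e⟩, ⟨c2, ?_, hc2e⟩⟩
          · rw [SimpleGraph.Walk.support_cons]
            exact List.mem_cons_of_mem _ hc1
          · rw [SimpleGraph.Walk.support_cons]
            exact List.mem_cons_of_mem _ hc2
      · rcases hbr with ⟨hy, hl⟩ | ⟨hy, hl⟩
        · refine Or.inl ⟨?_, ?_⟩
          · rw [SimpleGraph.Walk.support_cons]; exact List.mem_cons_of_mem _ hy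
          · rw [SimpleGraph.Walk.length_cons, SimpleGraph.Walk.length_cons, hl]
        · refine Or.inr ⟨?_, ?_⟩
          · rw [SimpleGraph.Walk.support_cons, List.mem_cons]
            rintro (h' | h')
            · exact hay h'.symm
            · exact hy h'
          · rw [SimpleGraph.Walk.length_cons, SimpleGraph.Walk.length_cons, hl]
    · -- the new edge, a ↦ s, c ↦ t
      have h1 : G.Adj (φ a) y := by rw [has]; exact hys.symm
      have h2 : G.Adj y (φ c) := by rw [hct]; exact hyt
      have hynp : y ∉ p.support := by
        intro hy
        obtain ⟨⟨c1, hc1, hc1e⟩, -⟩ := hyst hy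
        exact hp'.2 (hφ (hc1e.trans has.symm) ▸ hc1)
      have hl : p.length = q'.length := by
        rcases hbr with ⟨hy, -⟩ | ⟨-, hl⟩
        · exact absurd hy hynp
        · exact hl
      refine ⟨SimpleGraph.Walk.cons h1 (SimpleGraph.Walk.cons h2 p), ?_, ?_, ?_, ?_⟩
      · rw [SimpleGraph.Walk.cons_isPath_iff, SimpleGraph.Walk.cons_isPath_iff]
        refine ⟨⟨hp, hynp⟩, ?_⟩
        rw [SimpleGraph.Walk.support_cons, List.mem_cons]
        rintro (h' | h')
        · exact hay h'
        · exact hans h'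
      · rw [SimpleGraph.Walk.support_cons, SimpleGraph.Walk.support_cons,
          SimpleGraph.Walk.support_cons, List.map_cons,
          List.erase_cons_tail (by simpa using hay), List.erase_cons_head,
          ← herase, List.erase_of_not_mem hynp]
      · intro _
        refine ⟨⟨a, ?_, has⟩, ⟨c, ?_, hct⟩⟩
        · exact SimpleGraph.Walk.start_mem_support _
        · rw [SimpleGraph.Walk.support_cons]
          exact List.mem_cons_of_mem _ q'.start_mem_support
      · refine Or.inl ⟨?_, ?_⟩
        · rw [SimpleGraph.Walk.support_cons, SimpleGraph.Walk.support_cons]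
          exact List.mem_cons_of_mem _ List.mem_cons_self
        · rw [SimpleGraph.Walk.length_cons, SimpleGraph.Walk.length_cons,
            SimpleGraph.Walk.length_cons, hl]
    · -- the new edge, a ↦ t, c ↦ s
      have h1 : G.Adj (φ a) y := by rw [hat]; exact hyt.symm
      have h2 : G.Adj y (φ c) := by rw [hcs]; exact hys
      have hynp : y ∉ p.support := by
        intro hy
        obtain ⟨-, ⟨c2, hc2, hc2e⟩⟩ := hyst hy
        exact hp'.2 (hφ (hc2e.trans hat.symm) ▸ hc2)
      have hl : p.length = q'.length := by
        rcases hbr with ⟨hy, -⟩ | ⟨-, hl⟩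
        · exact absurd hy hynp
        · exact hl
      refine ⟨SimpleGraph.Walk.cons h1 (SimpleGraph.Walk.cons h2 p), ?_, ?_, ?_, ?_⟩
      · rw [SimpleGraph.Walk.cons_isPath_iff, SimpleGraph.Walk.cons_isPath_iff]
        refine ⟨⟨hp, hynp⟩, ?_⟩
        rw [SimpleGraph.Walk.support_cons, List.mem_cons]
        rintro (h' | h')
        · exact hay h'
        · exact hans h'
      · rw [SimpleGraph.Walk.support_cons, SimpleGraph.Walk.support_cons,
          SimpleGraph.Walk.support_cons, List.map_cons,
          List.erase_cons_tail (by simpa using hay), List.erase_cons_head,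
          ← herase, List.erase_of_not_mem hynp]
      · intro _
        refine ⟨⟨c, ?_, hcs⟩, ⟨a, ?_, hat⟩⟩
        · rw [SimpleGraph.Walk.support_cons]
          exact List.mem_cons_of_mem _ q'.start_mem_support
        · exact SimpleGraph.Walk.start_mem_support _
      · refine Or.inl ⟨?_, ?_⟩
        · rw [SimpleGraph.Walk.support_cons, SimpleGraph.Walk.support_cons]
          exact List.mem_cons_of_mem _ List.mem_cons_self
        · rw [SimpleGraph.Walk.length_cons, SimpleGraph.Walk.length_cons,
            SimpleGraph.Walk.length_cons, hl]

include hrange hNx hNy in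
/-- The reduced graph is a tree. -/
lemma RG_tree (hm : Nonempty (Fin m)) (htree : G.IsTree) (hsx : s ≠ x) (htx : t ≠ x)
    (hys : G.Adj y s) (hyt : G.Adj y t) :
    (RG G s t φ hst hφ).IsTree := by
  rw [SimpleGraph.isTree_iff_existsUnique_path]
  refine ⟨hm, ?_⟩
  · intro a b
    have hreach : (RG G s t φ hst hφ).Reachable a b := by
      obtain ⟨q⟩ := htree.isConnected (φ a) (φ b)
      exact RG_reach G x y s t φ hst hφ hrange hNx hNy hsx htx
        q.toPath.1.length q.toPath.1 le_rfl q.toPath.2 a b rfl rfl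
    refine ⟨hreach.some.toPath.1, hreach.some.toPath.2, ?_⟩
    intro p hp
    -- uniqueness via pushdown
    obtain ⟨P, hP, hPsupp, -, -⟩ :=
      RG_push G x y s t φ hst hφ hrange hNx hNy hsx htx hys hyt p hp
    obtain ⟨Q, hQ, hQsupp, -, -⟩ :=
      RG_push G x y s t φ hst hφ hrange hNx hNy hsx htx hys hyt
        hreach.some.toPath.1 hreach.some.toPath.2
    have hPQ : P = Q := htree.existsUnique_path (φ a) (φ b) |>.unique hP hQ
    have : p.support.map φ = hreach.some.toPath.1.support.map φ := by
      rw [← hPsupp, ← hQsupp, hPQ]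
    have hsupp : p.support = hreach.some.toPath.1.support :=
      List.map_injective_iff.2 hφ this
    exact walk_eq_of_support_eq p _ hsupp

end Facts

end Stmt13Aux

open Stmt13Aux in
lemma stmt13_exists_reduction (T : MarkedUniTrivalentTree)
    (h2 : 2 ≤ T.G.edgeFinset.card) :
    ∃ (x y : Fin T.n) (T' : MarkedUniTrivalentTree), IsReduction T x y T' ∧
      T'.n + 2 = T.n ∧
      (((∃ p : T.G.Walk T.v T.w, p.IsPath ∧ y ∉ p.support) ∧
          T.G.dist T.v T.w ≤ T'.G.dist T'.v T'.w) ∨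
        ((∀ p : T.G.Walk T.v T.w, p.IsPath → y ∈ p.support) ∧
          T.G.dist T.v T.w ≤ T'.G.dist T'.v T'.w + 1)) := by
  classical
  have hcard : T.G.edgeFinset.card + 1 = T.n := by simpa using T.tree.card_edgeFinset
  have hn3 : 3 ≤ T.n := by omega
  have hsum : ∑ u, T.G.degree u = 2 * T.G.edgeFinset.card :=
    T.G.sum_degrees_eq_twice_card_edges
  -- find an auxiliary leaf x ∉ {v, w}
  have hx : ∃ x0 : Fin T.n, T.G.degree x0 = 1 ∧ x0 ≠ T.v ∧ x0 ≠ T.w := by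
    by_contra hcon
    push_neg at hcon
    have hdeg3 : ∀ u ∈ Finset.univ \ ({T.v, T.w} : Finset (Fin T.n)),
        T.G.degree u = 3 := by
      intro u hu
      rw [Finset.mem_sdiff, Finset.mem_insert, Finset.mem_singleton] at hu
      push_neg at hu
      rcases T.deg u with h | h
      · exact absurd (hcon u h hu.2.1) hu.2.2
      · exact h
    have hsub : ({T.v, T.w} : Finset (Fin T.n)) ⊆ Finset.univ := Finset.subset_univ _
    have hsplit : ∑ u ∈ Finset.univ \ ({T.v, T.w} : Finset (Fin T.n)), T.G.degree u +
        ∑ u ∈ ({T.v, T.w} : Finset (Fin T.n)), T.G.degree u = ∑ u, T.G.degree u :=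
      Finset.sum_sdiff hsub
    have hpair : ∑ u ∈ ({T.v, T.w} : Finset (Fin T.n)), T.G.degree u = 2 := by
      rw [Finset.sum_pair T.hvw, T.hv, T.hw]
    have hsd : ∑ u ∈ Finset.univ \ ({T.v, T.w} : Finset (Fin T.n)), T.G.degree u =
        3 * (Finset.univ \ ({T.v, T.w} : Finset (Fin T.n))).card := by
      rw [Finset.sum_congr rfl hdeg3, Finset.sum_const, smul_eq_mul, mul_comm]
    have hcardsd : (Finset.univ \ ({T.v, T.w} : Finset (Fin T.n))).card = T.n - 2 := by
      rw [Finset.card_sdiff_of_subset hsub, Finset.card_pair T.hvw]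
      simp
    omega
  obtain ⟨x, hx1, hxv, hxw⟩ := hx
  -- the neighbor y of x
  obtain ⟨y, hy⟩ := Finset.card_eq_one.1 (hx1 : (T.G.neighborFinset x).card = 1)
  have hNx : ∀ z, T.G.Adj x z ↔ z = y := fun z => by
    rw [← SimpleGraph.mem_neighborFinset, hy, Finset.mem_singleton]
  have hxy : T.G.Adj x y := (hNx y).2 rfl
  -- y has degree 3
  have hdy : T.G.degree y = 3 := by
    rcases T.deg y with h1 | h3
    · exfalso
      obtain ⟨y', hy'⟩ := Finset.card_eq_one.1 (h1 : (T.G.neighborFinset y).card = 1)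
      have hxmem : x ∈ T.G.neighborFinset y :=
        (T.G.mem_neighborFinset y x).2 hxy.symm
      rw [hy', Finset.mem_singleton] at hxmem
      have hNy1 : ∀ z, T.G.Adj y z ↔ z = x := fun z => by
        rw [← SimpleGraph.mem_neighborFinset, hy', Finset.mem_singleton, hxmem]
      have hz : ∃ z : Fin T.n, z ≠ x ∧ z ≠ y := by
        by_contra hcon
        push_neg at hcon
        have hsub2 : (Finset.univ : Finset (Fin T.n)) ⊆ {x, y} := by
          intro z _
          rw [Finset.mem_insert, Finset.mem_singleton]
          by_cases h' : z = x
          · exact Or.inl h'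
          · exact Or.inr (hcon z h')
        have := Finset.card_le_card hsub2
        have h2' : ({x, y} : Finset (Fin T.n)).card ≤ 2 := Finset.card_insert_le _ _ |>.trans (by simp)
        simp only [Finset.card_univ, Fintype.card_fin] at this
        omega
      obtain ⟨z, hzx, hzy⟩ := hz
      obtain ⟨W⟩ := T.tree.isConnected x z
      obtain ⟨p, hp⟩ := W.toPath
      cases p with
      | nil => exact hzx rfl
      | @cons _ c _ h q =>
        have hcy : c = y := (hNx c).1 h
        subst hcy
        cases q with
        | nil => exact hzy rfl
        | @cons _ c' _ h' q' =>
          have hcx' : c' = x := (hNy1 c').1 h'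
          rw [SimpleGraph.Walk.cons_isPath_iff, SimpleGraph.Walk.cons_isPath_iff] at hp
          refine hp.2 ?_
          rw [SimpleGraph.Walk.support_cons]
          refine List.mem_cons_of_mem _ ?_
          rw [← hcx']
          exact q'.start_mem_support
    · exact h3
  -- the two other neighbors s, t of y
  have hxmemy : x ∈ T.G.neighborFinset y := (T.G.mem_neighborFinset y x).2 hxy.symm
  have hcard2 : ((T.G.neighborFinset y).erase x).card = 2 := by
    rw [Finset.card_erase_of_mem hxmemy]
    have : (T.G.neighborFinset y).card = 3 := hdy
    omega
  obtain ⟨s, t, hst, hset⟩ := Finset.card_eq_two.1 hcard2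
  have hsmem : s ∈ (T.G.neighborFinset y).erase x := by rw [hset]; simp
  have htmem : t ∈ (T.G.neighborFinset y).erase x := by rw [hset]; simp
  have hsx : s ≠ x := (Finset.mem_erase.1 hsmem).1
  have htx : t ≠ x := (Finset.mem_erase.1 htmem).1
  have hys : T.G.Adj y s :=
    (T.G.mem_neighborFinset y s).1 (Finset.mem_erase.1 hsmem).2
  have hyt : T.G.Adj y t :=
    (T.G.mem_neighborFinset y t).1 (Finset.mem_erase.1 htmem).2
  have hNy : ∀ z, T.G.Adj y z ↔ (z = x ∨ z = s ∨ z = t) := by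
    intro z
    constructor
    · intro h
      by_cases hzx : z = x
      · exact Or.inl hzx
      · have : z ∈ (T.G.neighborFinset y).erase x :=
          Finset.mem_erase.2 ⟨hzx, (T.G.mem_neighborFinset y z).2 h⟩
        rw [hset, Finset.mem_insert, Finset.mem_singleton] at this
        exact Or.inr this
    · rintro (rfl | rfl | rfl)
      · exact hxy.symm
      · exact hys
      · exact hyt
  -- s and t are not adjacent (acyclicity)
  have hnst : ¬ T.G.Adj s t := by
    intro h
    have hpu := SimpleGraph.isAcyclic_iff_path_unique.1 T.tree.IsAcyclic
    have hP1 : (SimpleGraph.Walk.cons h SimpleGraph.Walk.nil).IsPath := by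
      simp [SimpleGraph.Walk.isPath_def, h.ne]
    have hP2 : (SimpleGraph.Walk.cons hys.symm
        (SimpleGraph.Walk.cons hyt SimpleGraph.Walk.nil)).IsPath := by
      simp [SimpleGraph.Walk.isPath_def, hys.ne', hst, hyt.ne]
    have := hpu ⟨_, hP1⟩ ⟨_, hP2⟩
    have hlen := congrArg (fun P : T.G.Path s t => P.1.length) this
    simp at hlen
  -- v, w avoid x and y
  have hvx : T.v ≠ x := fun h => hxv h.symm
  have hwx : T.w ≠ x := fun h => hxw h.symm
  have hvy : T.v ≠ y := by
    intro h
    have := T.hv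
    rw [h, hdy] at this
    exact absurd this (by norm_num)
  have hwy : T.w ≠ y := by
    intro h
    have := T.hw
    rw [h, hdy] at this
    exact absurd this (by norm_num)
  -- the vertex set of the reduction
  let e := Fintype.equivFin {z : Fin T.n // z ≠ x ∧ z ≠ y}
  set m := Fintype.card {z : Fin T.n // z ≠ x ∧ z ≠ y} with hmdef
  let φ : Fin m → Fin T.n := fun a => (e.symm a).1
  have hφ : Function.Injective φ := fun a b hab => by
    have := e.symm.injective (Subtype.ext hab)
    exact this
  have hrange : ∀ z : Fin T.n, (z ≠ x ∧ z ≠ y) ↔ z ∈ Set.range φ := by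
    intro z
    constructor
    · intro hz
      refine ⟨e ⟨z, hz⟩, ?_⟩
      simp [φ]
    · rintro ⟨a, rfl⟩
      exact (e.symm a).2
  have hm : m + 2 = T.n := by
    have hfil : (Finset.univ.filter fun z : Fin T.n => z ≠ x ∧ z ≠ y) =
        Finset.univ \ {x, y} := by
      ext z
      simp [not_or]
    have hc1 : m = (Finset.univ.filter fun z : Fin T.n => z ≠ x ∧ z ≠ y).card := by
      rw [hmdef, Fintype.card_subtype]
    have hc2 : (Finset.univ \ ({x, y} : Finset (Fin T.n))).card = T.n - 2 := by
      rw [Finset.card_sdiff_of_subset (Finset.subset_univ _), Finset.card_pair hxy.ne]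
      simp
    have hc3 := congrArg Finset.card hfil
    omega
  -- the reduced graph
  let G' := Stmt13Aux.RG T.G s t φ hst hφ
  have hdeg' : ∀ a, G'.degree a = T.G.degree (φ a) :=
    Stmt13Aux.RG_degree T.G x y s t φ hst hφ hrange hNx hNy hnst hsx htx hys hyt
  let v' : Fin m := e ⟨T.v, hvx, hvy⟩
  let w' : Fin m := e ⟨T.w, hwx, hwy⟩
  have hφv : φ v' = T.v := by simp [φ, v']
  have hφw : φ w' = T.w := by simp [φ, w']
  have htree' : G'.IsTree :=
    Stmt13Aux.RG_tree T.G x y s t φ hst hφ hrange hNx hNy ⟨v'⟩ T.tree hsx htx hys hyt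
  let T' : MarkedUniTrivalentTree :=
    { n := m
      G := G'
      tree := htree'
      deg := fun a => by rw [hdeg' a]; exact T.deg (φ a)
      v := v'
      w := w'
      hv := by rw [hdeg' v', hφv]; exact T.hv
      hw := by rw [hdeg' w', hφw]; exact T.hw
      hvw := fun h => T.hvw (by
        have := congrArg φ h
        rwa [hφv, hφw] at this) }
  refine ⟨x, y, T', ?_, hm, ?_⟩
  · exact ⟨hxy, hx1, hxv, hxw, φ, hφ, hrange, hφv, hφw, s, t, hst, hys, hyt, hsx, htx,
      fun a b => Iff.rfl⟩
  · -- distance comparison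
    obtain ⟨W, hW⟩ := T.tree.isConnected.exists_walk_length_eq_dist T.v T.w
    have hq : W.bypass.IsPath := W.bypass_isPath
    have hqlen : W.bypass.length = T.G.dist T.v T.w :=
      le_antisymm (hW ▸ W.length_bypass_le) (SimpleGraph.dist_le _)
    obtain ⟨W', hW'⟩ := htree'.isConnected.exists_walk_length_eq_dist v' w'
    have hp' : W'.bypass.IsPath := W'.bypass_isPath
    have hp'len : W'.bypass.length ≤ G'.dist v' w' := hW' ▸ W'.length_bypass_le
    obtain ⟨P, hP, hPsupp, hPyst, hPbr⟩ :=
      Stmt13Aux.RG_push T.G x y s t φ hst hφ hrange hNx hNy hsx htx hys hyt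
        W'.bypass hp'
    have hPq : P.copy hφv hφw = W.bypass := by
      refine (T.tree.existsUnique_path T.v T.w).unique ?_ hq
      rw [SimpleGraph.Walk.isPath_copy]
      exact hP
    have hPsupp' : P.support = W.bypass.support := by
      rw [← hPq, SimpleGraph.Walk.support_copy]
    have hPlen : P.length = W.bypass.length := by
      rw [← hPq, SimpleGraph.Walk.length_copy]
    have hdist' : T'.G.dist T'.v T'.w = G'.dist v' w' := rfl
    by_cases hyq : y ∈ W.bypass.support
    · refine Or.inr ⟨?_, ?_⟩
      · intro p hp
        have := (T.tree.existsUnique_path T.v T.w).unique hp hq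
        rw [this]
        exact hyq
      · rcases hPbr with ⟨-, hl⟩ | ⟨hyn, -⟩
        · rw [hdist']
          omega
        · exact absurd (hPsupp' ▸ hyq) hyn
    · refine Or.inl ⟨⟨W.bypass, hq, hyq⟩, ?_⟩
      · rcases hPbr with ⟨hyn, -⟩ | ⟨-, hl⟩
        · exact absurd (hPsupp'.symm ▸ hyn : y ∈ W.bypass.support) hyq
        · rw [hdist']
          omega

/-- If `d : S → ℕ ∪ {∞}` satisfies `d ≥ 1` on single-edge trees, `d T ≥ d T'` for every
reduction whose deleted trivalent vertex `y` is off the `v`–`w` path, and `d T ≥ 2 · d T'`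
for every reduction with `y` on the `v`–`w` path, then `d T ≥ 2 ^ (d(v,w) - 1)` for every
marked uni-trivalent tree `T`. -/
theorem stmt13 (d : MarkedUniTrivalentTree → ℕ∞)
    (hbase : ∀ T : MarkedUniTrivalentTree, T.G.edgeFinset.card = 1 → 1 ≤ d T)
    (hoff : ∀ (T : MarkedUniTrivalentTree) (x y : Fin T.n) (T' : MarkedUniTrivalentTree),
      IsReduction T x y T' → (∃ p : T.G.Walk T.v T.w, p.IsPath ∧ y ∉ p.support) →
      d T' ≤ d T)
    (hon : ∀ (T : MarkedUniTrivalentTree) (x y : Fin T.n) (T' : MarkedUniTrivalentTree),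
      IsReduction T x y T' → (∀ p : T.G.Walk T.v T.w, p.IsPath → y ∈ p.support) →
      2 * d T' ≤ d T) :
    ∀ T : MarkedUniTrivalentTree, (2 : ℕ∞) ^ (T.G.dist T.v T.w - 1) ≤ d T := by
  have main : ∀ N (T : MarkedUniTrivalentTree), T.n ≤ N →
      (2 : ℕ∞) ^ (T.G.dist T.v T.w - 1) ≤ d T := by
    intro N
    induction N with
    | zero => intro T hT; exact absurd (Nat.lt_of_lt_of_le T.v.pos hT) (lt_irrefl 0)
    | succ N ih =>
      intro T hT
      have hn2 : 2 ≤ T.n := by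
        by_contra h
        push_neg at h
        have hv := T.v.isLt
        have hw := T.w.isLt
        exact T.hvw (Fin.ext (by omega))
      have hcard : T.G.edgeFinset.card + 1 = T.n := by
        simpa using T.tree.card_edgeFinset
      by_cases h1 : T.G.edgeFinset.card = 1
      · -- base case: single edge
        have hn : T.n = 2 := by omega
        have hdist : T.G.dist T.v T.w = 1 := by
          rw [SimpleGraph.dist_eq_one_iff_adj]
          obtain ⟨u, hu⟩ :=
            Finset.card_eq_one.1 (T.hv : (T.G.neighborFinset T.v).card = 1)
          have humem : u ∈ T.G.neighborFinset T.v := hu ▸ Finset.mem_singleton_self u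
          have hadj : T.G.Adj T.v u := (T.G.mem_neighborFinset T.v u).1 humem
          have huniv : ({T.v, T.w} : Finset (Fin T.n)) = Finset.univ :=
            Finset.eq_univ_of_card _ (by rw [Finset.card_pair T.hvw]; simp [hn])
          have humem2 : u ∈ ({T.v, T.w} : Finset (Fin T.n)) :=
            huniv ▸ Finset.mem_univ u
          rw [Finset.mem_insert, Finset.mem_singleton] at humem2
          rcases humem2 with h' | h'
          · exact absurd h'.symm hadj.ne
          · rw [← h']
            exact hadj
        rw [hdist]
        simpa using hbase T h1
      · have h2 : 2 ≤ T.G.edgeFinset.card := by omega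
        obtain ⟨x, y, T', hred, hsize, hcase⟩ := stmt13_exists_reduction T h2
        have hTle : T'.n ≤ N := by omega
        have IH := ih T' hTle
        rcases hcase with ⟨hoffpath, hdist⟩ | ⟨honpath, hdist⟩
        · calc (2 : ℕ∞) ^ (T.G.dist T.v T.w - 1)
              ≤ 2 ^ (T'.G.dist T'.v T'.w - 1) := by
                apply pow_le_pow_right₀ one_le_two
                omega
            _ ≤ d T' := IH
            _ ≤ d T := hoff T x y T' hred hoffpath
        · calc (2 : ℕ∞) ^ (T.G.dist T.v T.w - 1)
              ≤ 2 ^ T'.G.dist T'.v T'.w := by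
                apply pow_le_pow_right₀ one_le_two
                omega
            _ ≤ 2 * 2 ^ (T'.G.dist T'.v T'.w - 1) := by
                cases h : T'.G.dist T'.v T'.w with
                | zero => simp
                | succ k => rw [← pow_succ']; apply pow_le_pow_right₀ one_le_two; omega
            _ ≤ 2 * d T' := by exact mul_le_mul_right IH 2
            _ ≤ d T := hon T x y T' hred honpath
  intro T
  exact main T.n T le_rfl
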